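/- Let x and y be rational numbers with 0 < y < 1 and -y < x < 0, and set q = (x-1)(y-1) and γ = y-1. Then for every matroid M on a finite ground set E with no coloops, (-1)^{r(E)} · Z̃(M;q,γ) > 0, where r is the rank function of M. -/

import Mathlib

/-- A matroid on a finite ground set `E`, presented by its rank function. -/
structure RankMatroid (α : Type) [DecidableEq α] where
  /-- the ground set -/
  E : Finset α
  /-- the rank function -/
  r : Finset α → ℕ
  rank_le_card : ∀ A, A ⊆ E → r A ≤ A.card
  rank_mono : ∀ A B, A ⊆ B → B ⊆ E → r A ≤ r B
  rank_submodular : ∀ A B, A ⊆ E → B ⊆ E → r (A ∪ B) + r (A ∩ B) ≤ r A + r B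


/-- The matroid Tutte polynomial with constant edge weight `γ`:
`Z̃(M;q,γ) = Σ_{A⊆E} q^{-r(A)} γ^{|A|}`. -/
noncomputable def Ztc {α : Type} [DecidableEq α] (M : RankMatroid α) (q γ : ℚ) : ℚ :=
  ∑ A ∈ M.E.powerset, q ^ (-(M.r A : ℤ)) * γ ^ A.card



namespace RankMatroid
variable {α : Type} [DecidableEq α] (M : RankMatroid α)

lemma r_empty : M.r ∅ = 0 :=
  Nat.le_zero.mp (by simpa using M.rank_le_card ∅ (Finset.empty_subset _))

lemma r_insert_le {A : Finset α} {x : α} (hA : A ⊆ M.E) (hx : x ∈ M.E) :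
    M.r (insert x A) ≤ M.r A + 1 := by
  have h := M.rank_submodular A {x} hA (by simpa using hx)
  have h1 : M.r {x} ≤ 1 := by simpa using M.rank_le_card {x} (by simpa using hx)
  have h2 : A ∪ {x} = insert x A := by rw [Finset.union_comm, ← Finset.insert_eq]
  rw [h2] at h
  omega

lemma r_union_le {A B : Finset α} (hA : A ⊆ M.E) (hB : B ⊆ M.E) :
    M.r (A ∪ B) ≤ M.r A + B.card := by
  classical
  induction B using Finset.induction with
  | empty => simpa using le_self_add
  | @insert x B hx ih =>
      have hB' : B ⊆ M.E := (Finset.subset_insert x B).trans hB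
      have hxE : x ∈ M.E := hB (Finset.mem_insert_self x B)
      have h1 : A ∪ insert x B = insert x (A ∪ B) := by
        ext a; simp [Finset.mem_insert, Finset.mem_union]; try tauto
      have h2 := M.r_insert_le (A := A ∪ B) (Finset.union_subset hA hB') hxE
      rw [h1, Finset.card_insert_of_notMem hx]
      have := ih hB'
      omega

/-- Deletion. -/
def del (K : Finset α) : RankMatroid α where
  E := M.E \ K
  r := M.r
  rank_le_card A hA := M.rank_le_card A (hA.trans (Finset.sdiff_subset))
  rank_mono A B hAB hB := M.rank_mono A B hAB (hB.trans Finset.sdiff_subset)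
  rank_submodular A B hA hB :=
    M.rank_submodular A B (hA.trans Finset.sdiff_subset) (hB.trans Finset.sdiff_subset)

/-- Contraction. -/
def con (K : Finset α) (hK : K ⊆ M.E) : RankMatroid α where
  E := M.E \ K
  r A := M.r (A ∪ K) - M.r K
  rank_le_card A hA := by
    have h1 : A ⊆ M.E := hA.trans Finset.sdiff_subset
    have h2 := M.r_union_le hK h1
    have h3 : K ∪ A = A ∪ K := Finset.union_comm _ _
    rw [h3] at h2
    omega
  rank_mono A B hAB hB := by
    have hBE : B ⊆ M.E := hB.trans Finset.sdiff_subset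
    have := M.rank_mono (A ∪ K) (B ∪ K) (Finset.union_subset_union_left hAB)
      (Finset.union_subset hBE hK)
    omega
  rank_submodular A B hA hB := by
    have hAE : A ⊆ M.E := hA.trans Finset.sdiff_subset
    have hBE : B ⊆ M.E := hB.trans Finset.sdiff_subset
    have h := M.rank_submodular (A ∪ K) (B ∪ K) (Finset.union_subset hAE hK)
      (Finset.union_subset hBE hK)
    have h1 : A ∪ K ∪ (B ∪ K) = A ∪ B ∪ K := by
      ext a; simp [Finset.mem_union]; tauto
    have h2 : (A ∪ K) ∩ (B ∪ K) = A ∩ B ∪ K := by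
      ext a; simp [Finset.mem_union, Finset.mem_inter]; tauto
    rw [h1, h2] at h
    have m1 : M.r K ≤ M.r (A ∩ B ∪ K) := M.rank_mono K _ Finset.subset_union_right
      (Finset.union_subset ((Finset.inter_subset_left).trans hAE) hK)
    have m2 : M.r K ≤ M.r (A ∪ K) := M.rank_mono K _ Finset.subset_union_right
      (Finset.union_subset hAE hK)
    have m3 : M.r K ≤ M.r (B ∪ K) := M.rank_mono K _ Finset.subset_union_right
      (Finset.union_subset hBE hK)
    have m4 : M.r (A ∩ B ∪ K) ≤ M.r (A ∪ B ∪ K) := M.rank_mono _ _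
      (Finset.union_subset_union_left (Finset.inter_subset_left.trans Finset.subset_union_left))
      (Finset.union_subset (Finset.union_subset hAE hBE) hK)
    omega

end RankMatroid

section Sums
variable {α : Type} [DecidableEq α] {β : Type*} [AddCommMonoid β]

lemma sum_powerset_union_disj {s t : Finset α} (h : Disjoint s t) (f : Finset α → β) :
    ∑ A ∈ (s ∪ t).powerset, f A = ∑ A ∈ s.powerset, ∑ B ∈ t.powerset, f (A ∪ B) := by
  classical
  induction t using Finset.induction generalizing f with
  | empty => simp
  | @insert x t hx ih =>
      have hd : Disjoint s t := h.mono_right (Finset.subset_insert x t)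
      have hxs : x ∉ s ∪ t := by
        intro hmem
        rcases Finset.mem_union.mp hmem with h1 | h1
        · exact (Finset.disjoint_left.mp h) h1 (Finset.mem_insert_self x t)
        · exact hx h1
      have h1 : s ∪ insert x t = insert x (s ∪ t) := by
        ext a; simp only [Finset.mem_insert, Finset.mem_union]; tauto
      rw [h1, Finset.sum_powerset_insert hxs, ih hd f, ih hd (fun C => f (insert x C))]
      rw [← Finset.sum_add_distrib]
      refine Finset.sum_congr rfl fun A hA => ?_
      rw [Finset.sum_powerset_insert hx]
      exact congrArg₂ (· + ·) rfl (Finset.sum_congr rfl fun B _ => by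
        congr 1; ext a; simp only [Finset.mem_insert, Finset.mem_union]; tauto)

lemma sum_powerset_pow_card {K : Finset α} (x : ℚ) :
    ∑ B ∈ K.powerset, x ^ B.card = (1 + x) ^ K.card := by
  rw [Finset.sum_powerset_apply_card (fun m => x ^ m)]
  rw [add_comm (1:ℚ) x, add_pow]
  simp [mul_comm]

end Sums

namespace RankMatroid
variable {α : Type} [DecidableEq α] (M : RankMatroid α)

/-- The key "coloop" step. -/
lemma coloop_step {G : Finset α} (hG : G ⊆ M.E) {f : α} (hf : f ∈ G)
    (hdrop : M.r (G.erase f) < M.r G) {A : Finset α} (hA : A ⊆ G.erase f) :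
    M.r (insert f A) = M.r A + 1 := by
  have hGE : G.erase f ⊆ M.E := (Finset.erase_subset f G).trans hG
  have hAE : A ⊆ M.E := hA.trans hGE
  have hfE : f ∈ M.E := hG hf
  have hle := M.r_insert_le hAE hfE
  have hsub := M.rank_submodular (insert f A) (G.erase f)
    (Finset.insert_subset hfE hAE) hGE
  have hu : insert f A ∪ G.erase f = G := by
    rw [Finset.insert_union, Finset.union_eq_right.mpr hA, Finset.insert_erase hf]
  rw [hu] at hsub
  have hmono : M.r A ≤ M.r (insert f A ∩ G.erase f) :=
    M.rank_mono A _ (Finset.subset_inter (Finset.subset_insert f A) hA)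
      ((Finset.inter_subset_right).trans hGE)
  omega

/-- The master expansion identity. -/
lemma master {q γ : ℚ} (hq : q ≠ 0) {K : Finset α} (hK : K ⊆ M.E)
    (H : ∀ A, A ⊆ M.E \ K → ∀ B, B ⊆ K → B ≠ K → M.r (A ∪ B) = M.r A + B.card) :
    Ztc M q γ = ((1 + γ/q) ^ K.card - (γ/q) ^ K.card) * Ztc (M.del K) q γ
      + (γ/q) ^ K.card * q ^ ((K.card : ℤ) - (M.r K : ℤ)) * Ztc (M.con K hK) q γ := by
  classical
  have hdisj : Disjoint (M.E \ K) K := Finset.sdiff_disjoint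
  have hsplit : (M.E \ K) ∪ K = M.E := Finset.sdiff_union_of_subset hK
  have hzq : ∀ n : ℕ, q ^ (-(n:ℤ)) = (q ^ n)⁻¹ := fun n => by
    rw [zpow_neg, zpow_natCast]
  rw [show Ztc M q γ = ∑ A ∈ ((M.E \ K) ∪ K).powerset, q ^ (-(M.r A : ℤ)) * γ ^ A.card by
        rw [hsplit]; rfl,
      sum_powerset_union_disj hdisj]
  have hdel : Ztc (M.del K) q γ = ∑ A ∈ (M.E \ K).powerset, q ^ (-(M.r A : ℤ)) * γ ^ A.card := rfl
  have hcon : Ztc (M.con K hK) q γ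
      = ∑ A ∈ (M.E \ K).powerset, q ^ (-((M.r (A ∪ K) - M.r K : ℕ) : ℤ)) * γ ^ A.card := rfl
  rw [hdel, hcon, Finset.mul_sum, Finset.mul_sum, ← Finset.sum_add_distrib]
  refine Finset.sum_congr rfl fun A hA => ?_
  have hA' : A ⊆ M.E \ K := Finset.mem_powerset.mp hA
  have hAE : A ⊆ M.E := hA'.trans Finset.sdiff_subset
  have hAdisjK : Disjoint A K := hdisj.mono_left hA'
  have hcardU : ∀ B, B ⊆ K → (A ∪ B).card = A.card + B.card := fun B hB =>
    Finset.card_union_of_disjoint (hAdisjK.mono_right hB)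
  rw [← Finset.sum_erase_add _ _ (Finset.mem_powerset_self K)]
  have hstep : ∀ B ∈ K.powerset.erase K,
      q ^ (-(M.r (A ∪ B) : ℤ)) * γ ^ (A ∪ B).card
        = (q ^ (-(M.r A : ℤ)) * γ ^ A.card) * (γ/q) ^ B.card := by
    intro B hB
    have hBne : B ≠ K := (Finset.mem_erase.mp hB).1
    have hBK : B ⊆ K := Finset.mem_powerset.mp (Finset.mem_erase.mp hB).2
    rw [H A hA' B hBK hBne, hcardU B hBK, hzq, hzq, pow_add, pow_add, div_pow]
    have h1 : q ^ M.r A ≠ 0 := pow_ne_zero _ hq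
    have h2 : q ^ B.card ≠ 0 := pow_ne_zero _ hq
    field_simp
    try ring
  rw [Finset.sum_congr rfl hstep, ← Finset.mul_sum]
  have hgeom : ∑ B ∈ K.powerset.erase K, (γ/q) ^ B.card
      = (1 + γ/q) ^ K.card - (γ/q) ^ K.card := by
    have h := Finset.sum_erase_add K.powerset (fun B => (γ/q) ^ B.card)
      (Finset.mem_powerset_self K)
    rw [sum_powerset_pow_card] at h
    linarith
  rw [hgeom]
  have hle : M.r K ≤ M.r (A ∪ K) :=
    M.rank_mono K (A ∪ K) Finset.subset_union_right (Finset.union_subset hAE hK)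
  have hcast : (M.r (A ∪ K) : ℤ) = ((M.r (A ∪ K) - M.r K : ℕ) : ℤ) + (M.r K : ℤ) := by
    omega
  have hKterm : q ^ (-(M.r (A ∪ K) : ℤ)) * γ ^ (A ∪ K).card
      = ((γ/q) ^ K.card * q ^ ((K.card:ℤ) - (M.r K:ℤ)))
          * (q ^ (-((M.r (A ∪ K) - M.r K : ℕ):ℤ)) * γ ^ A.card) := by
    rw [hcardU K Finset.Subset.rfl, hcast, neg_add, zpow_add₀ hq, hzq, hzq,
      zpow_sub₀ hq, zpow_natCast, zpow_natCast, pow_add, div_pow]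
    have h1 : q ^ M.r K ≠ 0 := pow_ne_zero _ hq
    have h2 : q ^ K.card ≠ 0 := pow_ne_zero _ hq
    have h3 : q ^ (M.r (A ∪ K) - M.r K) ≠ 0 := pow_ne_zero _ hq
    field_simp
    try ring
  rw [hKterm]
  ring

end RankMatroid

namespace RankMatroid

lemma num4 {t a q : ℚ} (ht : 0 < t) (hta : t < a) (hq1 : q < 1)
    (h2 : t^2 < a^2 * (1-q)) {m : ℕ} (hm : 2 ≤ m) : t^m < a^m * (1-q) := by
  obtain ⟨j, rfl⟩ : ∃ j, m = j + 2 := ⟨m - 2, by omega⟩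
  have ha : 0 < a := ht.trans hta
  have htj : t^j ≤ a^j := pow_le_pow_left₀ ht.le hta.le j
  have haj : 0 < a^j := pow_pos ha j
  have h0 : (0:ℚ) < 1 - q := by linarith
  calc t^(j+2) = t^j * t^2 := by ring
    _ ≤ a^j * t^2 := by nlinarith [sq_nonneg t]
    _ < a^j * (a^2 * (1-q)) := mul_lt_mul_of_pos_left h2 haj
    _ = a^(j+2) * (1-q) := by ring

variable {α : Type} [DecidableEq α]

lemma pos_main {q γ : ℚ} (hq0 : 0 < q) (hq1 : q < 1)
    (ht : 0 < 1 + γ/q) (hta : 1 + γ/q < -(γ/q))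
    (h2 : (1 + γ/q)^2 < (γ/q)^2 * (1-q)) :
    ∀ (n : ℕ) (M : RankMatroid α), M.E.card ≤ n →
      (∀ e ∈ M.E, M.r (M.E.erase e) = M.r M.E) →
      0 < (-1 : ℚ) ^ M.r M.E * Ztc M q γ := by
  intro n
  induction n with
  | zero =>
      intro M hcard _
      have hE : M.E = ∅ := Finset.card_eq_zero.mp (Nat.le_zero.mp hcard)
      have h1 : Ztc M q γ = 1 := by
        simp only [Ztc]
        rw [hE]
        simp [M.r_empty]
      rw [h1, hE, M.r_empty]
      norm_num
  | succ n IH =>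
      intro M hcard hCl
      by_cases hE : M.E = ∅
      · have h1 : Ztc M q γ = 1 := by
          simp only [Ztc]
          rw [hE]
          simp [M.r_empty]
        rw [h1, hE, M.r_empty]
        norm_num
      obtain ⟨e, he⟩ := Finset.nonempty_iff_ne_empty.mpr hE
      set S := (M.E.erase e).filter
        (fun f => M.r ((M.E.erase e).erase f) < M.r (M.E.erase e)) with hSdef
      have hSmem : ∀ f, f ∈ S ↔ f ∈ M.E.erase e ∧
          M.r ((M.E.erase e).erase f) < M.r (M.E.erase e) := fun f => by
        rw [hSdef]; exact Finset.mem_filter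
      have hSe : ∀ a, a ∈ S → a ≠ e ∧ a ∈ M.E := fun a ha =>
        Finset.mem_erase.mp ((hSmem a).mp ha).1
      set K := insert e S with hKdef
      have hKmem : ∀ a, a ∈ K ↔ a = e ∨ a ∈ S := fun a => by
        rw [hKdef]; exact Finset.mem_insert
      have heK : e ∈ K := (hKmem e).mpr (Or.inl rfl)
      have heS : e ∉ S := fun h => ((hSe e h).1 rfl)
      have hKE : K ⊆ M.E := by
        intro a ha; rcases (hKmem a).mp ha with h | h
        · rw [h]; exact he
        · exact (hSe a h).2
      have hkcard : K.card = S.card + 1 := by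
        rw [hKdef]; exact Finset.card_insert_of_notMem heS
      -- iterated coloop steps
      have hH1 : ∀ B, B ⊆ S → ∀ A, A ⊆ M.E \ K → M.r (A ∪ B) = M.r A + B.card := by
        intro B
        induction B using Finset.induction with
        | empty => intro _ A _; simp
        | @insert f B hf ih =>
            intro hBS A hA
            have hfS : f ∈ S := hBS (Finset.mem_insert_self f B)
            have hBS' : B ⊆ S := (Finset.insert_subset_iff.mp hBS).2
            have hU : A ∪ insert f B = insert f (A ∪ B) := by
              ext a
              simp only [Finset.mem_union, Finset.mem_insert]
              tauto
            have hsubG : A ∪ B ⊆ (M.E.erase e).erase f := by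
              intro a ha
              rw [Finset.mem_erase, Finset.mem_erase]
              rcases Finset.mem_union.mp ha with h | h
              · obtain ⟨haE, haK⟩ := Finset.mem_sdiff.mp (hA h)
                exact ⟨fun hc => haK (by rw [hc]; exact (hKmem f).mpr (Or.inr hfS)),
                  fun hc => haK (by rw [hc]; exact heK), haE⟩
              · have hb := hSe a (hBS' h)
                exact ⟨fun hc => hf (hc ▸ h), hb.1, hb.2⟩
            have hdrop := ((hSmem f).mp hfS).2
            have hstep := M.coloop_step (Finset.erase_subset e M.E)
              (((hSmem f).mp hfS).1) hdrop hsubG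
            rw [hU, hstep, ih hBS' A hA, Finset.card_insert_of_notMem hf]
            omega
      -- the full hypothesis H for the master identity
      have hH : ∀ A, A ⊆ M.E \ K → ∀ B, B ⊆ K → B ≠ K → M.r (A ∪ B) = M.r A + B.card := by
        intro A hA B hBK hBne
        by_cases heB : e ∈ B
        · set B' := B.erase e with hB'def
          have hB'S : B' ⊆ S := by
            intro b hb
            obtain ⟨hbe, hbB⟩ := Finset.mem_erase.mp hb
            rcases (hKmem b).mp (hBK hbB) with h | h
            · exact absurd h hbe
            · exact h
          have hB'ne : B' ≠ S := by
            intro hcon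
            apply hBne
            rw [hKdef, ← hcon, hB'def, Finset.insert_erase heB]
          obtain ⟨f, hfS, hfB'⟩ : ∃ f, f ∈ S ∧ f ∉ B' := by
            by_contra hcon
            push_neg at hcon
            exact hB'ne (Finset.Subset.antisymm hB'S hcon)
          have hfe : f ≠ e := (hSe f hfS).1
          have hfE : f ∈ M.E := (hSe f hfS).2
          have hU : A ∪ B = insert e (A ∪ B') := by
            ext a
            simp only [Finset.mem_union, Finset.mem_insert, hB'def, Finset.mem_erase]
            constructor
            · rintro (h | h)
              · exact Or.inr (Or.inl h)
              · by_cases hc : a = e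
                · exact Or.inl hc
                · exact Or.inr (Or.inr ⟨hc, h⟩)
            · rintro (h | h | h)
              · rw [h]; exact Or.inr heB
              · exact Or.inl h
              · exact Or.inr h.2
          have hdrope : M.r ((M.E.erase f).erase e) < M.r (M.E.erase f) := by
            have hc : (M.E.erase f).erase e = (M.E.erase e).erase f := by
              ext a; simp only [Finset.mem_erase]; tauto
            rw [hc]
            calc M.r ((M.E.erase e).erase f) < M.r (M.E.erase e) := ((hSmem f).mp hfS).2
              _ ≤ M.r M.E := M.rank_mono _ _ (Finset.erase_subset e M.E) Finset.Subset.rfl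
              _ = M.r (M.E.erase f) := (hCl f hfE).symm
          have heG : e ∈ M.E.erase f := Finset.mem_erase.mpr ⟨hfe.symm, he⟩
          have hsubG : A ∪ B' ⊆ (M.E.erase f).erase e := by
            intro a ha
            rw [Finset.mem_erase, Finset.mem_erase]
            rcases Finset.mem_union.mp ha with h | h
            · obtain ⟨haE, haK⟩ := Finset.mem_sdiff.mp (hA h)
              exact ⟨fun hc => haK (by rw [hc]; exact heK),
                fun hc => haK (by rw [hc]; exact (hKmem f).mpr (Or.inr hfS)), haE⟩
            · have hbS := hB'S h
              exact ⟨(hSe a hbS).1, fun hc => hfB' (by rw [← hc]; exact h), (hSe a hbS).2⟩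
          have hstep := M.coloop_step (Finset.erase_subset f M.E) heG hdrope hsubG
          have hBcard : B.card = B'.card + 1 := by
            rw [hB'def]; exact (Finset.card_erase_add_one heB).symm
          rw [hU, hstep, hH1 B' hB'S A hA, hBcard]
          omega
        · have hBS : B ⊆ S := by
            intro b hb
            rcases (hKmem b).mp (hBK hb) with h | h
            · exact absurd (h ▸ hb) heB
            · exact h
          exact hH1 B hBS A hA
      have hEe : (M.E \ K) ∪ S = M.E.erase e := by
        ext a
        simp only [Finset.mem_union, Finset.mem_sdiff, Finset.mem_erase]
        constructor
        · rintro (⟨h1, h2⟩ | h)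
          · exact ⟨fun hc => h2 (by rw [hc]; exact heK), h1⟩
          · exact ⟨(hSe a h).1, (hSe a h).2⟩
        · rintro ⟨h1, h2⟩
          by_cases hc : a ∈ S
          · exact Or.inr hc
          · refine Or.inl ⟨h2, fun hk => ?_⟩
            rcases (hKmem a).mp hk with h | h
            exacts [h1 h, hc h]
      have hground : M.r (M.E \ K) + S.card = M.r M.E := by
        have h1 := hH1 S Finset.Subset.rfl (M.E \ K) Finset.Subset.rfl
        rw [hEe] at h1
        rw [← hCl e he, h1]
      have hrS : M.r S = S.card := by
        have h1 := hH1 S Finset.Subset.rfl ∅ (Finset.empty_subset _)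
        simpa [M.r_empty] using h1
      have hSsubE : S ⊆ M.E := fun a ha => (hSe a ha).2
      have hSsubK : S ⊆ K := fun a ha => (hKmem a).mpr (Or.inr ha)
      have hrKub : M.r K ≤ S.card + 1 := by
        calc M.r K ≤ M.r S + 1 := by
              rw [hKdef]; exact M.r_insert_le hSsubE he
          _ = S.card + 1 := by rw [hrS]
      have hrKlb : S.card ≤ M.r K := by
        calc S.card = M.r S := hrS.symm
          _ ≤ M.r K := M.rank_mono S K hSsubK hKE
      have hCl' : ∀ g ∈ M.E \ K, M.r ((M.E \ K).erase g) = M.r (M.E \ K) := by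
        intro g hg
        obtain ⟨hgE, hgK⟩ := Finset.mem_sdiff.mp hg
        refine le_antisymm (M.rank_mono _ _ (Finset.erase_subset g _) Finset.sdiff_subset) ?_
        by_contra hlt
        push_neg at hlt
        have hgid : ((M.E \ K).erase g) ∪ S = (M.E.erase e).erase g := by
          ext a
          simp only [Finset.mem_union, Finset.mem_erase, Finset.mem_sdiff]
          constructor
          · rintro (⟨hne, h1, h2⟩ | h)
            · exact ⟨hne, fun hc => h2 (by rw [hc]; exact heK), h1⟩
            · exact ⟨fun hc => hgK (by rw [← hc]; exact (hKmem a).mpr (Or.inr h)),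
                (hSe a h).1, (hSe a h).2⟩
          · rintro ⟨h1, h2, h3⟩
            by_cases hc : a ∈ S
            · exact Or.inr hc
            · refine Or.inl ⟨h1, h3, fun hk => ?_⟩
              rcases (hKmem a).mp hk with h | h
              exacts [h2 h, hc h]
        have h4 := hH1 S Finset.Subset.rfl ((M.E \ K).erase g)
          ((Finset.erase_subset g _).trans Finset.Subset.rfl)
        rw [hgid] at h4
        have h6 := hH1 S Finset.Subset.rfl (M.E \ K) Finset.Subset.rfl
        rw [hEe] at h6
        have h5 : M.r ((M.E.erase e).erase g) < M.r (M.E.erase e) := by omega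
        have hgS : g ∈ S := (hSmem g).mpr
          ⟨Finset.mem_erase.mpr ⟨fun hc => hgK (by rw [hc]; exact heK), hgE⟩, h5⟩
        exact hgK ((hKmem g).mpr (Or.inr hgS))
      have hClN : ∀ g ∈ M.E \ K,
          (M.con K hKE).r ((M.E \ K).erase g) = (M.con K hKE).r (M.E \ K) := by
        intro g hg
        obtain ⟨hgE, hgK⟩ := Finset.mem_sdiff.mp hg
        show M.r (((M.E \ K).erase g) ∪ K) - M.r K = M.r ((M.E \ K) ∪ K) - M.r K
        have i1 : ((M.E \ K).erase g) ∪ K = M.E.erase g := by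
          ext a
          simp only [Finset.mem_union, Finset.mem_erase, Finset.mem_sdiff]
          constructor
          · rintro (⟨h1, h2, h3⟩ | h)
            · exact ⟨h1, h2⟩
            · exact ⟨fun hc => hgK (hc ▸ h), hKE h⟩
          · rintro ⟨h1, h2⟩
            by_cases hc : a ∈ K
            · exact Or.inr hc
            · exact Or.inl ⟨h1, h2, hc⟩
        rw [i1, Finset.sdiff_union_of_subset hKE, hCl g hgE]
      have hcard' : (M.E \ K).card ≤ n := by
        have h1 := Finset.card_sdiff_of_subset hKE
        have h3 : K.card ≤ M.E.card := Finset.card_le_card hKE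
        omega
      have hF' : 0 < (-1:ℚ) ^ M.r (M.E \ K) * Ztc (M.del K) q γ := IH (M.del K) hcard' hCl'
      have hFN : 0 < (-1:ℚ) ^ ((M.con K hKE).r (M.E \ K)) * Ztc (M.con K hKE) q γ :=
        IH (M.con K hKE) hcard' hClN
      have hNg : (M.con K hKE).r (M.E \ K) + M.r K = M.r M.E := by
        show (M.r ((M.E \ K) ∪ K) - M.r K) + M.r K = M.r M.E
        rw [Finset.sdiff_union_of_subset hKE]
        exact Nat.sub_add_cancel (M.rank_mono K M.E hKE Finset.Subset.rfl)
      have hmaster := M.master (q := q) (γ := γ) (ne_of_gt hq0) hKE hH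
      have hrkcases : M.r K = S.card ∨ M.r K = S.card + 1 := by omega
      rcases hrkcases with hrK | hrK
      · -- the degenerate case : contraction equals deletion
        have heps0 : ∀ A, A ⊆ M.E \ K → M.r (A ∪ K) = M.r A + S.card := by
          intro A hA
          have hAE : A ⊆ M.E := hA.trans Finset.sdiff_subset
          refine le_antisymm ?_ ?_
          · have hsub := M.rank_submodular (A ∪ S) K (Finset.union_subset hAE hSsubE) hKE
            have e1 : (A ∪ S) ∪ K = A ∪ K := by
              rw [Finset.union_assoc]
              congr 1
              exact Finset.union_eq_right.mpr hSsubK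
            have e2 : (A ∪ S) ∩ K = S := by
              ext a
              simp only [Finset.mem_inter, Finset.mem_union]
              constructor
              · rintro ⟨h1 | h1, hk⟩
                · exact absurd hk (Finset.mem_sdiff.mp (hA h1)).2
                · exact h1
              · intro h
                exact ⟨Or.inr h, hSsubK h⟩
            have e3 := hH1 S Finset.Subset.rfl A hA
            rw [e1, e2, e3, hrS, hrK] at hsub
            omega
          · have e3 := hH1 S Finset.Subset.rfl A hA
            have e4 := M.rank_mono (A ∪ S) (A ∪ K)
              (Finset.union_subset_union_right hSsubK)
              (Finset.union_subset hAE hKE)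
            omega
        have hZN : Ztc (M.con K hKE) q γ = Ztc (M.del K) q γ := by
          refine Finset.sum_congr rfl fun A hA => ?_
          have hA' : A ⊆ M.E \ K := Finset.mem_powerset.mp hA
          have hval : M.r (A ∪ K) - M.r K = M.r A := by
            rw [heps0 A hA', hrK]; omega
          show q ^ (-((M.r (A ∪ K) - M.r K : ℕ) : ℤ)) * γ ^ A.card = _
          rw [hval]
          rfl
        have hexp : ((K.card : ℤ) - (M.r K : ℤ)) = 1 := by
          rw [hkcard, hrK]; push_cast; ring
        rw [hmaster, hZN, hexp, zpow_one]
        set Z' := Ztc (M.del K) q γ with hZ'def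
        set P' := (-1:ℚ) ^ M.r (M.E \ K) * Z' with hP'def
        rcases Nat.even_or_odd S.card with hk | hk
        · have hs1 : (-1:ℚ) ^ M.r M.E = (-1) ^ M.r (M.E \ K) := by
            rw [← hground, pow_add, Even.neg_one_pow hk, mul_one]
          have hodd : Odd K.card := by rw [hkcard]; exact hk.add_one
          have key : (-1:ℚ) ^ M.r M.E *
              (((1 + γ/q) ^ K.card - (γ/q) ^ K.card) * Z' + (γ/q) ^ K.card * q * Z')
              = ((1 + γ/q) ^ K.card - (γ/q) ^ K.card + (γ/q) ^ K.card * q) * P' := by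
            rw [hP'def, hs1]; ring
          rw [key]
          have hu : (γ/q) ^ K.card = -((-(γ/q)) ^ K.card) := by
            rw [Odd.neg_pow hodd]; ring
          rw [hu]
          have hp1 : 0 < (1 + γ/q) ^ K.card := pow_pos ht _
          have hp2 : 0 < (-(γ/q)) ^ K.card := pow_pos (lt_trans ht hta) _
          have hcoef : 0 < (1 + γ/q) ^ K.card - -((-(γ/q)) ^ K.card)
              + -((-(γ/q)) ^ K.card) * q := by
            nlinarith [mul_pos hp2 (show (0:ℚ) < 1 - q by linarith)]
          exact mul_pos hcoef hF'
        · have hs1 : (-1:ℚ) ^ M.r M.E = -((-1) ^ M.r (M.E \ K)) := by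
            rw [← hground, pow_add, Odd.neg_one_pow hk]; ring
          have heven : Even K.card := by rw [hkcard]; exact hk.add_one
          have key : (-1:ℚ) ^ M.r M.E *
              (((1 + γ/q) ^ K.card - (γ/q) ^ K.card) * Z' + (γ/q) ^ K.card * q * Z')
              = (-((1 + γ/q) ^ K.card - (γ/q) ^ K.card + (γ/q) ^ K.card * q)) * P' := by
            rw [hP'def, hs1]; ring
          rw [key]
          have hu : (γ/q) ^ K.card = (-(γ/q)) ^ K.card := (Even.neg_pow heven _).symm
          rw [hu]
          have hm2 : 2 ≤ K.card := by
            obtain ⟨j, hj⟩ := hk; omega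
          have h2' : (1 + γ/q)^2 < (-(γ/q))^2 * (1-q) := by
            have e5 : (-(γ/q))^2 = (γ/q)^2 := by ring
            rw [e5]; exact h2
          have hnum := num4 ht hta hq1 h2' hm2
          have hcoef : 0 < -((1 + γ/q) ^ K.card - (-(γ/q)) ^ K.card
              + (-(γ/q)) ^ K.card * q) := by nlinarith
          exact mul_pos hcoef hF'
      · -- the generic case
        have hexp : ((K.card : ℤ) - (M.r K : ℤ)) = 0 := by
          rw [hkcard, hrK]; push_cast; ring
        rw [hmaster, hexp, zpow_zero, mul_one]
        set Z' := Ztc (M.del K) q γ with hZ'def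
        set ZN := Ztc (M.con K hKE) q γ with hZNdef
        set P' := (-1:ℚ) ^ M.r (M.E \ K) * Z' with hP'def
        set PN := (-1:ℚ) ^ ((M.con K hKE).r (M.E \ K)) * ZN with hPNdef
        rcases Nat.even_or_odd S.card with hk | hk
        · have hodd : Odd K.card := by rw [hkcard]; exact hk.add_one
          have hs1 : (-1:ℚ) ^ M.r M.E = (-1) ^ M.r (M.E \ K) := by
            rw [← hground, pow_add, Even.neg_one_pow hk, mul_one]
          have hs2 : (-1:ℚ) ^ M.r M.E = -((-1:ℚ) ^ ((M.con K hKE).r (M.E \ K))) := by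
            rw [← hNg, hrK, ← hkcard, pow_add, Odd.neg_one_pow hodd]; ring
          have key : (-1:ℚ) ^ M.r M.E *
              (((1 + γ/q) ^ K.card - (γ/q) ^ K.card) * Z' + (γ/q) ^ K.card * ZN)
              = ((1 + γ/q) ^ K.card - (γ/q) ^ K.card) * P' + (-((γ/q) ^ K.card)) * PN := by
            rw [hP'def, hPNdef]
            linear_combination (((1 + γ/q) ^ K.card - (γ/q) ^ K.card) * Z') * hs1
              + ((γ/q) ^ K.card * ZN) * hs2
          rw [key]
          have hu : (γ/q) ^ K.card = -((-(γ/q)) ^ K.card) := by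
            rw [Odd.neg_pow hodd]; ring
          rw [hu]
          have hp1 : 0 < (1 + γ/q) ^ K.card := pow_pos ht _
          have hp2 : 0 < (-(γ/q)) ^ K.card := pow_pos (lt_trans ht hta) _
          have m1 := mul_pos (show (0:ℚ) < (1 + γ/q) ^ K.card - -((-(γ/q)) ^ K.card) by
            linarith) hF'
          have m2 := mul_pos (show (0:ℚ) < -(-((-(γ/q)) ^ K.card)) by linarith) hFN
          linarith
        · have heven : Even K.card := by rw [hkcard]; exact hk.add_one
          have hs1 : (-1:ℚ) ^ M.r M.E = -((-1) ^ M.r (M.E \ K)) := by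
            rw [← hground, pow_add, Odd.neg_one_pow hk]; ring
          have hs2 : (-1:ℚ) ^ M.r M.E = (-1:ℚ) ^ ((M.con K hKE).r (M.E \ K)) := by
            rw [← hNg, hrK, ← hkcard, pow_add, Even.neg_one_pow heven, mul_one]
          have key : (-1:ℚ) ^ M.r M.E *
              (((1 + γ/q) ^ K.card - (γ/q) ^ K.card) * Z' + (γ/q) ^ K.card * ZN)
              = (-((1 + γ/q) ^ K.card - (γ/q) ^ K.card)) * P' + ((γ/q) ^ K.card) * PN := by
            rw [hP'def, hPNdef]
            linear_combination (((1 + γ/q) ^ K.card - (γ/q) ^ K.card) * Z') * hs1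
              + ((γ/q) ^ K.card * ZN) * hs2
          rw [key]
          have hu : (γ/q) ^ K.card = (-(γ/q)) ^ K.card := (Even.neg_pow heven _).symm
          rw [hu]
          have hp2 : 0 < (-(γ/q)) ^ K.card := pow_pos (lt_trans ht hta) _
          have hplt : (1 + γ/q) ^ K.card < (-(γ/q)) ^ K.card :=
            pow_lt_pow_left₀ hta ht.le (by omega)
          have m1 := mul_pos (show (0:ℚ) < -((1 + γ/q) ^ K.card - (-(γ/q)) ^ K.card) by linarith) hF'
          have m2 := mul_pos hp2 hFN
          linarith

end RankMatroid


/-- A basis of a matroid: an independent subset of the ground set of full rank. -/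
def RankMatroid.IsBasis {α : Type} [DecidableEq α] (M : RankMatroid α) (B : Finset α) : Prop :=
  B ⊆ M.E ∧ M.r B = B.card ∧ M.r B = M.r M.E

/-- A coloop of a matroid: an element belonging to every basis. -/
def RankMatroid.IsColoop {α : Type} [DecidableEq α] (M : RankMatroid α) (e : α) : Prop :=
  e ∈ M.E ∧ ∀ B : Finset α, M.IsBasis B → e ∈ B

/-- for rationals `0 < y < 1`, `-y < x < 0`, with `q = (x-1)(y-1)` and
`γ = y - 1`, every matroid `M` without coloops on a finite ground set `E` satisfies
`(-1)^{r(E)}·Z̃(M;q,γ) > 0`. -/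
theorem matroid_tutte_sign_regionM {α : Type} [DecidableEq α] (x y : ℚ)
    (hy0 : 0 < y) (hy1 : y < 1) (hxy : -y < x) (hx0 : x < 0)
    (M : RankMatroid α) (hcoloopless : ∀ e ∈ M.E, ¬ M.IsColoop e) :
    0 < (-1 : ℚ) ^ M.r M.E * Ztc M ((x - 1) * (y - 1)) (y - 1) := by
  classical
  have hCl : ∀ e ∈ M.E, M.r (M.E.erase e) = M.r M.E := by
    intro e he
    have h := hcoloopless e he
    simp only [RankMatroid.IsColoop] at h
    push_neg at h
    obtain ⟨B, hB, heB⟩ := h he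
    simp only [RankMatroid.IsBasis] at hB
    obtain ⟨hBE, hBcard, hBrank⟩ := hB
    refine le_antisymm (M.rank_mono _ _ (Finset.erase_subset e M.E) Finset.Subset.rfl) ?_
    calc M.r M.E = M.r B := hBrank.symm
      _ ≤ M.r (M.E.erase e) := M.rank_mono B _
          (Finset.subset_erase.mpr ⟨hBE, heB⟩) (Finset.erase_subset e M.E)
  have hx1 : x - 1 < 0 := by linarith
  have hy1' : y - 1 < 0 := by linarith
  have hdx : (0:ℚ) < 1 - x := by linarith
  have hne1 : x - 1 ≠ 0 := ne_of_lt hx1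
  have hne2 : y - 1 ≠ 0 := ne_of_lt hy1'
  have hne3 : (1:ℚ) - x ≠ 0 := ne_of_gt hdx
  have hq0 : 0 < (x - 1) * (y - 1) := mul_pos_of_neg_of_neg hx1 hy1'
  have hq1 : (x - 1) * (y - 1) < 1 := by
    nlinarith [mul_pos hy0 (neg_pos.mpr hx0)]
  have hU : (y - 1) / ((x - 1) * (y - 1)) = -(1/(1-x)) := by
    field_simp
    ring
  have hT : 1 + (y - 1) / ((x - 1) * (y - 1)) = (-x)/(1-x) := by
    rw [hU]
    field_simp
    ring
  have ht : 0 < 1 + (y - 1) / ((x - 1) * (y - 1)) := by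
    rw [hT]; exact div_pos (by linarith) hdx
  have hta : 1 + (y - 1) / ((x - 1) * (y - 1)) < -((y - 1) / ((x - 1) * (y - 1))) := by
    rw [hT, hU, neg_neg, div_lt_div_iff₀ hdx hdx]
    nlinarith
  have h2 : (1 + (y - 1) / ((x - 1) * (y - 1)))^2
      < ((y - 1) / ((x - 1) * (y - 1)))^2 * (1 - (x - 1) * (y - 1)) := by
    rw [hT, hU]
    have e1 : ((-x)/(1-x))^2 = x^2/(1-x)^2 := by rw [div_pow, neg_sq]
    have e2 : (-(1/(1-x)))^2 = 1/(1-x)^2 := by rw [neg_sq, div_pow, one_pow]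
    rw [e1, e2, div_lt_iff₀ (by positivity : (0:ℚ) < (1-x)^2)]
    have e3 : 1/(1-x)^2 * (1 - (x-1)*(y-1)) * (1-x)^2 = 1 - (x-1)*(y-1) := by
      field_simp
    rw [e3]
    nlinarith [mul_pos hdx (show (0:ℚ) < x + y by linarith)]
  exact RankMatroid.pos_main hq0 hq1 ht hta h2 M.E.card M le_rfl hCl
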